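/- If G is a transitive permutation group on [n] and T ⊆ [n] is a set that intersects every G-shift S^π (π ∈ G) of a fixed set S of size k ≥ 1, then |T| ≥ n/k. -/

import Mathlib

/-- Flip the `i`-th bit of `x`. -/
def flipBit {n : ℕ} (x : Fin n → Bool) (i : Fin n) : Fin n → Bool :=
  fun j => if j = i then !x j else x j

/-- Flip all bits of `x` in the block `B`. -/
def flipSet {n : ℕ} (x : Fin n → Bool) (B : Finset (Fin n)) : Fin n → Bool :=
  fun j => if j ∈ B then !x j else x j

/-- Sensitivity of `f` at the input `x`. -/
def sensAt {n : ℕ} (f : (Fin n → Bool) → Bool) (x : Fin n → Bool) : ℕ :=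
  (Finset.univ.filter fun i => f (flipBit x i) ≠ f x).card

/-- Sensitivity of `f`. -/
def sens {n : ℕ} (f : (Fin n → Bool) → Bool) : ℕ :=
  Finset.univ.sup fun x => sensAt f x

/-- 0-sensitivity of `f`: max sensitivity over inputs where `f` is 0. -/
def sens0 {n : ℕ} (f : (Fin n → Bool) → Bool) : ℕ :=
  (Finset.univ.filter fun x => f x = false).sup fun x => sensAt f x

/-- 1-sensitivity of `f`: max sensitivity over inputs where `f` is 1. -/
def sens1 {n : ℕ} (f : (Fin n → Bool) → Bool) : ℕ :=
  (Finset.univ.filter fun x => f x = true).sup fun x => sensAt f x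

/-- Block sensitivity of `f` at `x`: the largest number of pairwise disjoint
nonempty blocks each of whose flips changes the value of `f` at `x`. -/
noncomputable def bsensAt {n : ℕ} (f : (Fin n → Bool) → Bool) (x : Fin n → Bool) : ℕ :=
  sSup {r : ℕ | ∃ B : Fin r → Finset (Fin n),
    (∀ j, (B j).Nonempty ∧ f (flipSet x (B j)) ≠ f x) ∧
    ∀ j j', j ≠ j' → Disjoint (B j) (B j')}

/-- Block sensitivity of `f`. -/
noncomputable def bsens {n : ℕ} (f : (Fin n → Bool) → Bool) : ℕ :=
  Finset.univ.sup fun x => bsensAt f x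

/-- A permutation group on `[n]` is transitive. -/
def IsTransitive {n : ℕ} (G : Subgroup (Equiv.Perm (Fin n))) : Prop :=
  ∀ i j : Fin n, ∃ π ∈ G, π i = j

open Classical in
/-- The minterm-transitive function `p^G` defined by the partial assignment
`p` with support `S`: it is 1 on `x` iff `x` extends some `G`-shift of `p`. -/
noncomputable def mintermFn {n : ℕ} (G : Subgroup (Equiv.Perm (Fin n)))
    (S : Finset (Fin n)) (p : Fin n → Bool) : (Fin n → Bool) → Bool :=
  fun x => decide (∃ π ∈ G, ∀ i ∈ S, x (π i) = p i)

/-- If `T` intersects every `G`-shift of a set `S` of size `k ≥ 1`, where `G`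
is transitive, then `|T| ≥ n/k`, i.e. `|T|·k ≥ n`. -/
theorem blocker_card_lower_bound {n k : ℕ} (G : Subgroup (Equiv.Perm (Fin n)))
    (hG : IsTransitive G) (S T : Finset (Fin n)) (hk : S.card = k) (h1 : 1 ≤ k)
    (hT : ∀ π : Equiv.Perm (Fin n), π ∈ G → ((S.image π) ∩ T).Nonempty) :
    n ≤ T.card * k := by
  classical
  set F := Finset.univ.filter (fun π : Equiv.Perm (Fin n) => π ∈ G) with hFdef
  -- all fibers of evaluation-at-s have the same size, namely |F|/n
  have key : ∀ s t : Fin n, (F.filter (fun π => π s = t)).card * n = F.card := by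
    intro s t
    have hfib : ∀ t' : Fin n,
        (F.filter (fun π => π s = t')).card = (F.filter (fun π => π s = t)).card := by
      intro t'
      obtain ⟨σ, hσG, hσ⟩ := hG t' t
      apply Finset.card_bij (fun π _ => σ * π)
      · intro π hπ
        simp only [hFdef, Finset.mem_filter, Finset.mem_univ, true_and] at hπ ⊢
        exact ⟨G.mul_mem hσG hπ.1, by simp [hπ.2, hσ]⟩
      · intro a _ b _ hab
        exact mul_left_cancel hab
      · intro π hπ
        simp only [hFdef, Finset.mem_filter, Finset.mem_univ, true_and] at hπ
        refine ⟨σ⁻¹ * π, ?_, by group⟩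
        simp only [hFdef, Finset.mem_filter, Finset.mem_univ, true_and]
        refine ⟨G.mul_mem (G.inv_mem hσG) hπ.1, ?_⟩
        have : σ⁻¹ t = t' := by rw [← hσ]; simp
        simp [hπ.2, this]
        exact this
    have hsum := Finset.card_eq_sum_card_fiberwise
      (f := fun π : Equiv.Perm (Fin n) => π s) (s := F) (t := Finset.univ)
      (fun x _ => Finset.mem_univ _)
    rw [hsum, Finset.sum_congr rfl (fun t' _ => hfib t'), Finset.sum_const,
      Finset.card_univ, Fintype.card_fin, smul_eq_mul, mul_comm]
  have hFpos : 0 < F.card := by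
    refine Finset.card_pos.mpr ⟨1, ?_⟩
    exact Finset.mem_filter.mpr ⟨Finset.mem_univ _, G.one_mem⟩
  -- main counting
  have step1 : F.card ≤ ∑ π ∈ F, ((S.image π) ∩ T).card := by
    calc F.card = ∑ _π ∈ F, 1 := by simp
    _ ≤ ∑ π ∈ F, ((S.image π) ∩ T).card := by
        refine Finset.sum_le_sum (fun π hπ => ?_)
        have hπG : π ∈ G := by simpa [hFdef] using hπ
        exact Finset.card_pos.mpr (hT π hπG)
  have step2 : ∀ π : Equiv.Perm (Fin n),
      ((S.image π) ∩ T).card = ∑ s ∈ S, if π s ∈ T then 1 else 0 := by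
    intro π
    have himg : (S.image π) ∩ T = (S.filter fun s => π s ∈ T).image π := by
      ext x
      simp only [Finset.mem_inter, Finset.mem_image, Finset.mem_filter]
      constructor
      · rintro ⟨⟨s, hs, rfl⟩, hx⟩
        exact ⟨s, ⟨hs, hx⟩, rfl⟩
      · rintro ⟨s, ⟨hs, hsT⟩, rfl⟩
        exact ⟨⟨s, hs, rfl⟩, hsT⟩
    rw [himg, Finset.card_image_of_injective _ π.injective, Finset.card_filter]
  have step3 : ∀ s : Fin n,
      (F.filter fun π => π s ∈ T).card = ∑ t ∈ T, (F.filter (fun π => π s = t)).card := by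
    intro s
    rw [Finset.card_eq_sum_card_fiberwise
      (f := fun π : Equiv.Perm (Fin n) => π s) (s := F.filter fun π => π s ∈ T) (t := T)
      (fun x hx => (Finset.mem_filter.mp hx).2)]
    refine Finset.sum_congr rfl (fun t ht => ?_)
    congr 1
    rw [Finset.filter_filter]
    refine Finset.filter_congr (fun π _ => ?_)
    constructor
    · rintro ⟨_, h⟩; exact h
    · rintro h; exact ⟨h ▸ ht, h⟩
  have total : F.card ≤ ∑ s ∈ S, ∑ t ∈ T, (F.filter (fun π => π s = t)).card := by
    calc F.card ≤ ∑ π ∈ F, ((S.image π) ∩ T).card := step1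
    _ = ∑ π ∈ F, ∑ s ∈ S, if π s ∈ T then 1 else 0 :=
        Finset.sum_congr rfl (fun π _ => step2 π)
    _ = ∑ s ∈ S, ∑ π ∈ F, if π s ∈ T then 1 else 0 := Finset.sum_comm
    _ = ∑ s ∈ S, (F.filter fun π => π s ∈ T).card :=
        Finset.sum_congr rfl (fun s _ => (Finset.card_filter _ _).symm)
    _ = ∑ s ∈ S, ∑ t ∈ T, (F.filter (fun π => π s = t)).card :=
        Finset.sum_congr rfl (fun s _ => step3 s)
  have main : F.card * n ≤ F.card * (T.card * k) := by
    calc F.card * n ≤ (∑ s ∈ S, ∑ t ∈ T, (F.filter (fun π => π s = t)).card) * n :=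
        Nat.mul_le_mul_right n total
    _ = ∑ s ∈ S, ∑ t ∈ T, (F.filter (fun π => π s = t)).card * n := by
        rw [Finset.sum_mul]
        exact Finset.sum_congr rfl (fun s _ => Finset.sum_mul ..)
    _ = ∑ s ∈ S, ∑ t ∈ T, F.card :=
        Finset.sum_congr rfl (fun s _ => Finset.sum_congr rfl (fun t _ => key s t))
    _ = k * (T.card * F.card) := by simp [Finset.sum_const, hk, mul_assoc]
    _ = F.card * (T.card * k) := by ring
  exact Nat.le_of_mul_le_mul_left main hFpos
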